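/- Let H : ℝ^p → Matrix(d×d, ℝ) and v_1, v_2 : ℝ^p → ℝ^d be differentiable at θ_0 ∈ ℝ^p, with H(θ_0) symmetric and invertible, and set u_1 = H(θ_0)^{-1} v_1(θ_0) and u_2 = H(θ_0)^{-1} v_2(θ_0) (held fixed). Define the original objective f(θ) = v_1(θ)ᵀ H(θ)^{-1} v_2(θ) and the backward-friendly objective g(θ) = v_1(θ)ᵀ u_2 + u_1ᵀ v_2(θ) - u_1ᵀ H(θ) u_2. Then g(θ_0) = f(θ_0) and the Fréchet derivatives agree: Dg(θ_0) = Df(θ_0). -/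

import Mathlib

open Matrix

attribute [local instance] Matrix.normedAddCommGroup Matrix.normedSpace

noncomputable section

section Aux

variable {p d : ℕ} {θ₀ : Fin p → ℝ}

lemma entry_diffAt {H : (Fin p → ℝ) → Matrix (Fin d) (Fin d) ℝ}
    (hH : DifferentiableAt ℝ H θ₀) (i j : Fin d) :
    DifferentiableAt ℝ (fun θ => H θ i j) θ₀ :=
  (differentiableAt_pi.mp ((differentiableAt_pi.mp hH) i)) j

lemma det_diffAt {H : (Fin p → ℝ) → Matrix (Fin d) (Fin d) ℝ}
    (hH : DifferentiableAt ℝ H θ₀) :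
    DifferentiableAt ℝ (fun θ => (H θ).det) θ₀ := by
  simp only [Matrix.det_apply']
  refine DifferentiableAt.fun_sum fun σ _ => DifferentiableAt.const_mul ?_ _
  exact (HasFDerivAt.finset_prod
    (fun i _ => (entry_diffAt hH (σ i) i).hasFDerivAt)).differentiableAt

lemma updateRow_diffAt {H : (Fin p → ℝ) → Matrix (Fin d) (Fin d) ℝ}
    (hH : DifferentiableAt ℝ H θ₀) (j : Fin d) (c : Fin d → ℝ) :
    DifferentiableAt ℝ (fun θ => (H θ).updateRow j c) θ₀ := by
  refine differentiableAt_pi.mpr ?_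
  intro k
  by_cases h : k = j
  · subst h
    simp only [Matrix.updateRow_self]
    exact differentiableAt_const _
  · simp only [Matrix.updateRow_ne h]
    exact (differentiableAt_pi.mp hH) k

lemma adjugate_diffAt {H : (Fin p → ℝ) → Matrix (Fin d) (Fin d) ℝ}
    (hH : DifferentiableAt ℝ H θ₀) :
    DifferentiableAt ℝ (fun θ => (H θ).adjugate) θ₀ := by
  refine differentiableAt_pi.mpr ?_
  intro i
  refine differentiableAt_pi.mpr ?_
  intro j
  simp only [Matrix.adjugate_apply]
  exact det_diffAt (updateRow_diffAt hH j _)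

lemma inv_diffAt {H : (Fin p → ℝ) → Matrix (Fin d) (Fin d) ℝ}
    (hH : DifferentiableAt ℝ H θ₀) (hdet : (H θ₀).det ≠ 0) :
    DifferentiableAt ℝ (fun θ => (H θ)⁻¹) θ₀ := by
  have heq : (fun θ => (H θ)⁻¹) = fun θ => ((H θ).det)⁻¹ • (H θ).adjugate := by
    funext θ
    rw [Matrix.inv_def, Ring.inverse_eq_inv']
  rw [heq]
  exact ((det_diffAt hH).inv hdet).smul (adjugate_diffAt hH)

lemma dot_diffAt {f g : (Fin p → ℝ) → Fin d → ℝ}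
    (hf : DifferentiableAt ℝ f θ₀) (hg : DifferentiableAt ℝ g θ₀) :
    DifferentiableAt ℝ (fun θ => f θ ⬝ᵥ g θ) θ₀ := by
  simp only [dotProduct]
  exact DifferentiableAt.fun_sum fun i _ =>
    ((differentiableAt_pi.mp hf) i).mul ((differentiableAt_pi.mp hg) i)

lemma mulVec_diffAt {M : (Fin p → ℝ) → Matrix (Fin d) (Fin d) ℝ}
    {x : (Fin p → ℝ) → Fin d → ℝ}
    (hM : DifferentiableAt ℝ M θ₀) (hx : DifferentiableAt ℝ x θ₀) :
    DifferentiableAt ℝ (fun θ => M θ *ᵥ x θ) θ₀ := by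
  rw [differentiableAt_pi]
  intro i
  simp only [Matrix.mulVec, dotProduct]
  exact DifferentiableAt.fun_sum fun j _ =>
    (entry_diffAt hM i j).mul ((differentiableAt_pi.mp hx) j)

lemma transpose_diffAt {H : (Fin p → ℝ) → Matrix (Fin d) (Fin d) ℝ}
    (hH : DifferentiableAt ℝ H θ₀) :
    DifferentiableAt ℝ (fun θ => (H θ)ᵀ) θ₀ := by
  refine differentiableAt_pi.mpr ?_
  intro i
  refine differentiableAt_pi.mpr ?_
  intro j
  simp only [Matrix.transpose_apply]
  exact entry_diffAt hH j i

end Aux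

/-- with `H`, `v₁`, `v₂` differentiable at `θ₀`, `H θ₀` symmetric and
invertible, and the frozen vectors `u₁ = (H θ₀)⁻¹ v₁(θ₀)`, `u₂ = (H θ₀)⁻¹ v₂(θ₀)`,
the backward-friendly objective `g(θ) = v₁(θ)ᵀ u₂ + u₁ᵀ v₂(θ) - u₁ᵀ H(θ) u₂` agrees with
the original objective `f(θ) = v₁(θ)ᵀ (H θ)⁻¹ v₂(θ)` at `θ₀`, both in value and in
Fréchet derivative. -/
theorem backward_friendly_objective_agrees (p d : ℕ)
    (H : (Fin p → ℝ) → Matrix (Fin d) (Fin d) ℝ)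
    (v₁ v₂ : (Fin p → ℝ) → (Fin d → ℝ))
    (θ₀ : Fin p → ℝ)
    (hH : DifferentiableAt ℝ H θ₀)
    (hv₁ : DifferentiableAt ℝ v₁ θ₀)
    (hv₂ : DifferentiableAt ℝ v₂ θ₀)
    (hsymm : (H θ₀).IsSymm)
    (hinv : IsUnit (H θ₀))
    (u₁ u₂ : Fin d → ℝ)
    (hu₁ : u₁ = (H θ₀)⁻¹ *ᵥ v₁ θ₀)
    (hu₂ : u₂ = (H θ₀)⁻¹ *ᵥ v₂ θ₀) :
    (v₁ θ₀ ⬝ᵥ u₂ + u₁ ⬝ᵥ v₂ θ₀ - u₁ ⬝ᵥ (H θ₀ *ᵥ u₂)) =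
      v₁ θ₀ ⬝ᵥ ((H θ₀)⁻¹ *ᵥ v₂ θ₀) ∧
    fderiv ℝ (fun θ => v₁ θ ⬝ᵥ u₂ + u₁ ⬝ᵥ v₂ θ - u₁ ⬝ᵥ (H θ *ᵥ u₂)) θ₀ =
      fderiv ℝ (fun θ => v₁ θ ⬝ᵥ ((H θ)⁻¹ *ᵥ v₂ θ)) θ₀ := by
  have hdetu : IsUnit (H θ₀).det := (Matrix.isUnit_iff_isUnit_det _).mp hinv
  have hdet : (H θ₀).det ≠ 0 := hdetu.ne_zero
  -- value equality
  have hval : (v₁ θ₀ ⬝ᵥ u₂ + u₁ ⬝ᵥ v₂ θ₀ - u₁ ⬝ᵥ (H θ₀ *ᵥ u₂)) =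
      v₁ θ₀ ⬝ᵥ ((H θ₀)⁻¹ *ᵥ v₂ θ₀) := by
    rw [hu₂, Matrix.mulVec_mulVec, Matrix.mul_nonsing_inv _ hdetu, Matrix.one_mulVec,
      add_sub_cancel_right]
  refine ⟨hval, ?_⟩
  -- differentiability of the two objectives
  set g : (Fin p → ℝ) → ℝ := fun θ => v₁ θ ⬝ᵥ u₂ + u₁ ⬝ᵥ v₂ θ - u₁ ⬝ᵥ (H θ *ᵥ u₂) with hgdef
  set f : (Fin p → ℝ) → ℝ := fun θ => v₁ θ ⬝ᵥ ((H θ)⁻¹ *ᵥ v₂ θ) with hfdef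
  have hgd : DifferentiableAt ℝ g θ₀ :=
    ((dot_diffAt hv₁ (differentiableAt_const _)).add
      (dot_diffAt (differentiableAt_const _) hv₂)).sub
      (dot_diffAt (differentiableAt_const _) (mulVec_diffAt hH (differentiableAt_const _)))
  have hfd : DifferentiableAt ℝ f θ₀ :=
    dot_diffAt hv₁ (mulVec_diffAt (inv_diffAt hH hdet) hv₂)
  -- the difference function
  set a : (Fin p → ℝ) → Fin d → ℝ := fun θ => v₁ θ - (H θ)ᵀ *ᵥ u₁ with hadef
  set b : (Fin p → ℝ) → Fin d → ℝ := fun θ => u₂ - (H θ)⁻¹ *ᵥ v₂ θ with hbdef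
  have had : DifferentiableAt ℝ a θ₀ :=
    hv₁.sub (mulVec_diffAt (transpose_diffAt hH) (differentiableAt_const _))
  have hbd : DifferentiableAt ℝ b θ₀ :=
    (differentiableAt_const _).sub (mulVec_diffAt (inv_diffAt hH hdet) hv₂)
  have ha0 : a θ₀ = 0 := by
    rw [hadef]
    simp only
    rw [hsymm.eq, hu₁, Matrix.mulVec_mulVec, Matrix.mul_nonsing_inv _ hdetu,
      Matrix.one_mulVec, sub_self]
  have hb0 : b θ₀ = 0 := by
    rw [hbdef]
    simp only
    rw [hu₂, sub_self]
  -- eventual equality g - f = a ⬝ᵥ b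
  have hev : ∀ᶠ θ in nhds θ₀, (H θ).det ≠ 0 := by
    have hc : ContinuousAt (fun θ => (H θ).det) θ₀ := (det_diffAt hH).continuousAt
    exact hc.eventually_ne hdet
  have hEq : (fun θ => g θ - f θ) =ᶠ[nhds θ₀] fun θ => a θ ⬝ᵥ b θ := by
    filter_upwards [hev] with θ hθ
    have hθu : IsUnit (H θ).det := isUnit_iff_ne_zero.mpr hθ
    have h1 : H θ *ᵥ ((H θ)⁻¹ *ᵥ v₂ θ) = v₂ θ := by
      rw [Matrix.mulVec_mulVec, Matrix.mul_nonsing_inv _ hθu, Matrix.one_mulVec]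
    have h2 : ∀ w : Fin d → ℝ, ((H θ)ᵀ *ᵥ u₁) ⬝ᵥ w = u₁ ⬝ᵥ (H θ *ᵥ w) := by
      intro w
      rw [Matrix.mulVec_transpose, ← Matrix.dotProduct_mulVec]
    simp only [hgdef, hfdef, hadef, hbdef, sub_dotProduct, dotProduct_sub,
      h2, h1]
    ring
  have hφ : HasFDerivAt (fun θ => a θ ⬝ᵥ b θ)
      (0 : (Fin p → ℝ) →L[ℝ] ℝ) θ₀ := by
    have h : ∀ i : Fin d, HasFDerivAt (fun θ => a θ i * b θ i)
        (0 : (Fin p → ℝ) →L[ℝ] ℝ) θ₀ := by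
      intro i
      have hai : DifferentiableAt ℝ (fun θ => a θ i) θ₀ := (differentiableAt_pi.mp had) i
      have hbi : DifferentiableAt ℝ (fun θ => b θ i) θ₀ := (differentiableAt_pi.mp hbd) i
      have := hai.hasFDerivAt.mul hbi.hasFDerivAt
      have ha0i : a θ₀ i = 0 := by rw [ha0]; rfl
      have hb0i : b θ₀ i = 0 := by rw [hb0]; rfl
      rw [ha0i, hb0i] at this
      simp at this
      exact this
    have hsum := HasFDerivAt.fun_sum (u := (Finset.univ : Finset (Fin d)))
      (fun i _ => h i)
    simp only [Finset.sum_const_zero] at hsum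
    have : (fun θ => a θ ⬝ᵥ b θ) = fun θ => ∑ i : Fin d, a θ i * b θ i := by
      funext θ; simp [dotProduct]
    rw [this]
    exact hsum
  have hsubEq : fderiv ℝ (fun θ => g θ - f θ) θ₀ = 0 := by
    rw [hEq.fderiv_eq]
    exact hφ.fderiv
  rw [fderiv_fun_sub hgd hfd] at hsubEq
  exact sub_eq_zero.mp hsubEq
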